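/- Let I ⊆ ℝ be an interval, p ≥ 2, M : I^p → I^p a weakly contractive mean-type mapping, and suppose K : I^p → I is a continuous M-invariant mean. Then a continuous function F : I^p → ℝ satisfies F ∘ M = F if and only if there exists a continuous function φ : I → ℝ such that F = φ ∘ K. -/
import Mathlib


open Set Filter Topology

noncomputable def vmax {p : ℕ} (v : Fin p → ℝ) : ℝ := ⨆ i, v i
noncomputable def vmin {p : ℕ} (v : Fin p → ℝ) : ℝ := ⨅ i, v i

/-- The "box" `I^p`. -/
def box (I : Set ℝ) (p : ℕ) : Set (Fin p → ℝ) := {v | ∀ i, v i ∈ I}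

/-- `K` is a mean on `I^p`: internality. -/
def IsMeanOn (I : Set ℝ) (p : ℕ) (K : (Fin p → ℝ) → ℝ) : Prop :=
  ∀ v ∈ box I p, vmin v ≤ K v ∧ K v ≤ vmax v

/-- `M` is a mean-type mapping: each coordinate is a mean. -/
def MeanType (I : Set ℝ) (p : ℕ) (M : (Fin p → ℝ) → (Fin p → ℝ)) : Prop :=
  ∀ v ∈ box I p, ∀ i, vmin v ≤ M v i ∧ M v i ≤ vmax v

def Nonconstant {p : ℕ} (v : Fin p → ℝ) : Prop := ¬ ∃ c, ∀ i, v i = c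

def Contractive (I : Set ℝ) (p : ℕ) (M : (Fin p → ℝ) → (Fin p → ℝ)) : Prop :=
  ∀ v ∈ box I p, Nonconstant v → vmax (M v) - vmin (M v) < vmax v - vmin v

def WeaklyContractive (I : Set ℝ) (p : ℕ) (M : (Fin p → ℝ) → (Fin p → ℝ)) : Prop :=
  ∀ v ∈ box I p, Nonconstant v → ∃ n₀ : ℕ, ∀ n ≥ n₀,
    vmax (M^[n] v) - vmin (M^[n] v) < vmax v - vmin v

/-- `T(a) = {v ∈ I^p : max v - min v ≤ a}`. -/
def Tset (I : Set ℝ) (p : ℕ) (a : ℝ) : Set (Fin p → ℝ) :=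
  {v ∈ box I p | vmax v - vmin v ≤ a}

section Aux

variable {p : ℕ} [Nonempty (Fin p)]

lemma le_vmax' (v : Fin p → ℝ) (i : Fin p) : v i ≤ vmax v :=
  le_ciSup (Set.Finite.bddAbove (Set.finite_range v)) i

lemma vmin_le' (v : Fin p → ℝ) (i : Fin p) : vmin v ≤ v i :=
  ciInf_le (Set.Finite.bddBelow (Set.finite_range v)) i

lemma vmax_le' {v : Fin p → ℝ} {a : ℝ} (h : ∀ i, v i ≤ a) : vmax v ≤ a :=
  ciSup_le h

lemma le_vmin' {v : Fin p → ℝ} {a : ℝ} (h : ∀ i, a ≤ v i) : a ≤ vmin v :=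
  le_ciInf h

lemma vmax_mem (v : Fin p → ℝ) : ∃ i, vmax v = v i := by
  obtain ⟨i, hi⟩ := Finite.exists_max v
  exact ⟨i, le_antisymm (vmax_le' hi) (le_vmax' v i)⟩

lemma vmin_mem (v : Fin p → ℝ) : ∃ i, vmin v = v i := by
  obtain ⟨i, hi⟩ := Finite.exists_min v
  exact ⟨i, le_antisymm (vmin_le' v i) (le_vmin' hi)⟩

lemma vmax_continuous : Continuous (vmax : (Fin p → ℝ) → ℝ) := by
  have : (vmax : (Fin p → ℝ) → ℝ) =
      fun v => Finset.univ.sup' Finset.univ_nonempty (fun i => v i) := by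
    funext v
    exact (Finset.sup'_univ_eq_ciSup v).symm
  rw [this]
  exact Continuous.finset_sup'_apply Finset.univ_nonempty fun i _ => continuous_apply i

lemma vmin_continuous : Continuous (vmin : (Fin p → ℝ) → ℝ) := by
  have : (vmin : (Fin p → ℝ) → ℝ) =
      fun v => Finset.univ.inf' Finset.univ_nonempty (fun i => v i) := by
    funext v
    exact (Finset.inf'_univ_eq_ciInf v).symm
  rw [this]
  exact Continuous.finset_inf'_apply Finset.univ_nonempty fun i _ => continuous_apply i

lemma vmax_const (c : ℝ) : vmax (fun _ : Fin p => c) = c := ciSup_const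

lemma vmin_const (c : ℝ) : vmin (fun _ : Fin p => c) = c := ciInf_const

end Aux

theorem stmt5 (I : Set ℝ) (hI : I.OrdConnected) (p : ℕ) (hp : 2 ≤ p)
    (M : (Fin p → ℝ) → (Fin p → ℝ)) (hMT : MeanType I p M)
    (hW : WeaklyContractive I p M)
    (K : (Fin p → ℝ) → ℝ) (hKm : IsMeanOn I p K) (hKc : ContinuousOn K (box I p))
    (hKi : ∀ v ∈ box I p, K (M v) = K v)
    (F : (Fin p → ℝ) → ℝ) (hFc : ContinuousOn F (box I p)) :
    (∀ v ∈ box I p, F (M v) = F v) ↔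
      ∃ φ : ℝ → ℝ, ContinuousOn φ I ∧ ∀ v ∈ box I p, F v = φ (K v) := by
  haveI : Nonempty (Fin p) := ⟨⟨0, by omega⟩⟩
  -- endpoints of a box vector lie in I, so M maps the box into the box
  have hvminI : ∀ v ∈ box I p, vmin v ∈ I := by
    intro v hv
    obtain ⟨i, hi⟩ := vmin_mem v
    rw [hi]; exact hv i
  have hvmaxI : ∀ v ∈ box I p, vmax v ∈ I := by
    intro v hv
    obtain ⟨i, hi⟩ := vmax_mem v
    rw [hi]; exact hv i
  have hMbox : ∀ v ∈ box I p, M v ∈ box I p := by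
    intro v hv i
    exact hI.out (hvminI v hv) (hvmaxI v hv) ⟨(hMT v hv i).1, (hMT v hv i).2⟩
  constructor
  · -- forward direction
    intro hF
    refine ⟨fun x => F (fun _ => x), ?_, ?_⟩
    · -- continuity of φ
      have hc : Continuous (fun x : ℝ => (fun _ : Fin p => x)) :=
        continuous_pi fun _ => continuous_id
      exact hFc.comp hc.continuousOn (fun x hx i => hx)
    · intro v hv
      set a := vmin v with ha
      set b := vmax v with hb
      have hIcc : Icc a b ⊆ I := hI.out (hvminI v hv) (hvmaxI v hv)
      set B : Set (Fin p → ℝ) := Set.univ.pi (fun _ => Icc a b) with hBdef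
      have hBmem : ∀ w : Fin p → ℝ, w ∈ B ↔ ∀ i, w i ∈ Icc a b := by
        intro w; rw [hBdef, Set.mem_univ_pi]
      have hBc : IsCompact B := isCompact_univ_pi fun _ => isCompact_Icc
      have hBcl : IsClosed B := isClosed_set_pi fun _ _ => isClosed_Icc
      have hBbox : B ⊆ box I p := fun w hw i => hIcc ((hBmem w).1 hw i)
      set C : Set (Fin p → ℝ) := (B ∩ F ⁻¹' {F v}) ∩ K ⁻¹' {K v} with hCdef
      have hCsub : C ⊆ B := fun w hw => hw.1.1
      have hCbox : C ⊆ box I p := fun w hw => hBbox (hCsub hw)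
      have hCcl : IsClosed C := by
        have h1 : IsClosed (B ∩ F ⁻¹' {F v}) :=
          (hFc.mono hBbox).preimage_isClosed_of_isClosed hBcl isClosed_singleton
        have h2 : ContinuousOn K (B ∩ F ⁻¹' {F v}) :=
          hKc.mono (fun w hw => hBbox hw.1)
        exact h2.preimage_isClosed_of_isClosed h1 isClosed_singleton
      have hCcompact : IsCompact C := IsCompact.of_isClosed_subset hBc hCcl hCsub
      have hvC : v ∈ C := by
        refine ⟨⟨(hBmem v).2 fun i => ⟨vmin_le' v i, le_vmax' v i⟩, rfl⟩, rfl⟩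
      -- C is invariant under M
      have hMC : ∀ w ∈ C, M w ∈ C := by
        intro w hw
        have hwB := (hBmem w).1 (hCsub hw)
        have hwbox : w ∈ box I p := hCbox hw
        have h1 : a ≤ vmin w := le_vmin' fun i => (hwB i).1
        have h2 : vmax w ≤ b := vmax_le' fun i => (hwB i).2
        refine ⟨⟨(hBmem (M w)).2 fun i =>
          ⟨h1.trans (hMT w hwbox i).1, (hMT w hwbox i).2.trans h2⟩, ?_⟩, ?_⟩
        · show F (M w) = F v
          rw [hF w hwbox]; exact hw.1.2
        · show K (M w) = K v
          rw [hKi w hwbox]; exact hw.2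
      have hMnC : ∀ w ∈ C, ∀ n, M^[n] w ∈ C := by
        intro w hw n
        induction n with
        | zero => exact hw
        | succ n ih => rw [Function.iterate_succ_apply']; exact hMC _ ih
      -- minimize the diameter over C
      have hdc : Continuous (fun w : Fin p → ℝ => vmax w - vmin w) :=
        vmax_continuous.sub vmin_continuous
      obtain ⟨w, hwC, hwmin⟩ := hCcompact.exists_isMinOn ⟨v, hvC⟩ hdc.continuousOn
      -- the minimizer is constant
      have hwd : vmax w - vmin w = 0 := by
        by_contra hne
        have hnc : Nonconstant w := by
          rintro ⟨c, hc⟩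
          have : w = fun _ => c := funext hc
          rw [this, vmax_const, vmin_const] at hne
          simp at hne
        obtain ⟨n₀, hn₀⟩ := hW w (hCbox hwC) hnc
        have h1 := hn₀ n₀ le_rfl
        have h2 : vmax w - vmin w ≤ vmax (M^[n₀] w) - vmin (M^[n₀] w) :=
          hwmin (hMnC w hwC n₀)
        linarith
      have hcw : ∀ i, w i = vmin w := by
        intro i
        have h1 := vmin_le' w i
        have h2 := le_vmax' w i
        linarith
      set c := vmin w with hcdef
      have hwconst : w = fun _ => c := funext hcw
      -- K w = c
      have hKw : K w = c := by
        have := hKm w (hCbox hwC)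
        have h2 : vmax w = c := by linarith
        exact le_antisymm (h2 ▸ this.2) this.1
      have hKv : c = K v := by rw [← hKw]; exact hwC.2
      have hFw : F w = F v := hwC.1.2
      calc F v = F w := hFw.symm
        _ = F (fun _ => c) := by rw [← hwconst]
        _ = F (fun _ => K v) := by rw [hKv]
  · -- converse
    rintro ⟨φ, hφc, hφ⟩ v hv
    rw [hφ (M v) (hMbox v hv), hφ v hv, hKi v hv]
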